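/- Let q > 1 be an integer, n ≥ 1, and d with 2 ≤ d ≤ n. The MDS weight enumerators M_{n,d}(x,y) (defined by M_{n,d}(x,y) = x^n + ∑_{s=d}^{n} C(n,s)(q−1)[∑_{i=0}^{s−d}(−1)^i C(s−1,i) q^{s−d−i}] x^{n−s} y^s for d ≤ n, extended to all needed indices) satisfy the MacWilliams transformation identity q^{n+1−d} M_{n,n+2−d}(x,y) = M_{n,d}(x + (q−1)y, x − y). -/

import Mathlib

open MvPolynomial
open Finset

/-- The MDS weight enumerator `M_{n,d}(x,y)` of length `n` and minimum distance `d`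
over a group of order `q`:
`M_{n,d}(x,y) = xⁿ + ∑_{s=d}^{n} C(n,s)(q-1)[∑_{i=0}^{s-d}(-1)^i C(s-1,i) q^(s-d-i)] x^(n-s) y^s`. -/
noncomputable def mdsEnum (q n d : ℕ) : MvPolynomial (Fin 2) ℚ :=
  X 0 ^ n + ∑ s ∈ Finset.Icc d n,
    MvPolynomial.C ((n.choose s : ℚ) * ((q : ℚ) - 1) *
        ∑ i ∈ Finset.range (s - d + 1),
          (-1 : ℚ) ^ i * ((s - 1).choose i : ℚ) * (q : ℚ) ^ (s - d - i)) *
      X 0 ^ (n - s) * X 1 ^ s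



/-- Partial alternating sum of binomial coefficients. -/
lemma alt_partial (s r : ℕ) (hs : 1 ≤ s) :
    ∑ j ∈ range (r + 1), (-1 : ℚ) ^ j * (s.choose j : ℚ)
      = (-1 : ℚ) ^ r * ((s - 1).choose r : ℚ) := by
  induction r with
  | zero => simp
  | succ r ih =>
    rw [Finset.sum_range_succ, ih]
    obtain ⟨s', rfl⟩ : ∃ s', s = s' + 1 := ⟨s - 1, by omega⟩
    rw [show s' + 1 - 1 = s' from rfl, Nat.choose_succ_succ]
    push_cast
    ring

lemma idA (q' : ℚ) (s : ℕ) (hs : 1 ≤ s) (m : ℕ) :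
    ∑ j ∈ range (m + 1), (-1 : ℚ) ^ j * (s.choose j : ℚ) * (q' * q' ^ (m - j) - 1)
      = (q' - 1) * ∑ i ∈ range (m + 1), (-1 : ℚ) ^ i * ((s - 1).choose i : ℚ) * q' ^ (m - i) := by
  induction m with
  | zero => simp
  | succ m ih =>
    rw [Finset.sum_range_succ, Finset.sum_range_succ ((fun i => (-1 : ℚ) ^ i * ((s - 1).choose i : ℚ) * q' ^ (m + 1 - i)))]
    have e1 : ∀ j ∈ range (m + 1),
        (-1 : ℚ) ^ j * (s.choose j : ℚ) * (q' * q' ^ (m + 1 - j) - 1)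
          = q' * ((-1 : ℚ) ^ j * (s.choose j : ℚ) * (q' * q' ^ (m - j) - 1))
            + (q' - 1) * ((-1 : ℚ) ^ j * (s.choose j : ℚ)) := by
      intro j hj; rw [mem_range] at hj
      rw [show m + 1 - j = (m - j) + 1 from by omega, pow_succ]
      ring
    have e2 : ∀ i ∈ range (m + 1),
        (-1 : ℚ) ^ i * ((s - 1).choose i : ℚ) * q' ^ (m + 1 - i)
          = q' * ((-1 : ℚ) ^ i * ((s - 1).choose i : ℚ) * q' ^ (m - i)) := by
      intro i hi; rw [mem_range] at hi
      rw [show m + 1 - i = (m - i) + 1 from by omega, pow_succ]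
      ring
    rw [Finset.sum_congr rfl e1, Finset.sum_add_distrib, ← Finset.mul_sum, ← Finset.mul_sum, ih,
      alt_partial s m hs, Finset.sum_congr rfl e2, ← Finset.mul_sum]
    have hc : (s.choose (m + 1) : ℚ) = ((s - 1).choose m : ℚ) + ((s - 1).choose (m + 1) : ℚ) := by
      obtain ⟨s', rfl⟩ : ∃ s', s = s' + 1 := ⟨s - 1, by omega⟩
      rw [show s' + 1 - 1 = s' from rfl, Nat.choose_succ_succ]; push_cast; ring
    rw [hc]
    simp only [Nat.sub_self, pow_zero]
    ring

/-- The key coefficient identity for `d ≤ s`. -/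
lemma keylemma (q' : ℚ) (d s : ℕ) (hd : 1 ≤ d) (hs : d ≤ s) :
    ∑ t ∈ range (s + 1), (-1 : ℚ) ^ (s - t) * (s.choose t : ℚ) * q' ^ (t + 1 - d)
      = (q' - 1) * ∑ i ∈ range (s - d + 1), (-1 : ℚ) ^ i * ((s - 1).choose i : ℚ) * q' ^ (s - d - i) := by
  have hs1 : 1 ≤ s := le_trans hd hs
  -- reflect the sum
  rw [← Finset.sum_range_reflect]
  have e0 : ∀ j ∈ range (s + 1),
      (-1 : ℚ) ^ (s - (s + 1 - 1 - j)) * (s.choose (s + 1 - 1 - j) : ℚ) * q' ^ ((s + 1 - 1 - j) + 1 - d)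
        = (-1 : ℚ) ^ j * (s.choose j : ℚ) * q' ^ (s - j + 1 - d) := by
    intro j hj; rw [mem_range] at hj
    rw [show s + 1 - 1 - j = s - j from by omega, show s - (s - j) = j from by omega,
      Nat.choose_symm (by omega)]
  rw [Finset.sum_congr rfl e0]
  -- split the range at s - d + 1
  rw [Finset.range_eq_Ico, ← Finset.sum_Ico_consecutive _ (Nat.zero_le (s - d + 1)) (by omega : s - d + 1 ≤ s + 1)]
  have e1 : ∀ j ∈ Finset.Ico 0 (s - d + 1),
      (-1 : ℚ) ^ j * (s.choose j : ℚ) * q' ^ (s - j + 1 - d)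
        = (-1 : ℚ) ^ j * (s.choose j : ℚ) * (q' * q' ^ (s - d - j)) := by
    intro j hj; rw [Finset.mem_Ico] at hj
    rw [show s - j + 1 - d = (s - d - j) + 1 from by omega, pow_succ]; ring
  have e2 : ∀ j ∈ Finset.Ico (s - d + 1) (s + 1),
      (-1 : ℚ) ^ j * (s.choose j : ℚ) * q' ^ (s - j + 1 - d)
        = (-1 : ℚ) ^ j * (s.choose j : ℚ) := by
    intro j hj; rw [Finset.mem_Ico] at hj
    rw [show s - j + 1 - d = 0 from by omega, pow_zero, mul_one]
  rw [Finset.sum_congr rfl e1, Finset.sum_congr rfl e2]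
  -- the tail sum
  have htail : ∑ j ∈ Finset.Ico (s - d + 1) (s + 1), (-1 : ℚ) ^ j * (s.choose j : ℚ)
      = - ∑ j ∈ Finset.Ico 0 (s - d + 1), (-1 : ℚ) ^ j * (s.choose j : ℚ) := by
    have h := Finset.sum_Ico_consecutive (fun j => (-1 : ℚ) ^ j * (s.choose j : ℚ))
      (Nat.zero_le (s - d + 1)) (by omega : s - d + 1 ≤ s + 1)
    have hz : ∑ j ∈ Finset.Ico 0 (s + 1), (-1 : ℚ) ^ j * (s.choose j : ℚ) = 0 := by
      rw [← Finset.range_eq_Ico, alt_partial s s hs1, Nat.choose_eq_zero_of_lt (by omega)]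
      simp
    linarith [h, hz]
  rw [htail, ← Finset.range_eq_Ico]
  -- use idA with m = s - d
  have h2 := idA q' s hs1 (s - d)
  have e3 : ∀ j ∈ range (s - d + 1),
      (-1 : ℚ) ^ j * (s.choose j : ℚ) * (q' * q' ^ (s - d - j) - 1)
        = (-1 : ℚ) ^ j * (s.choose j : ℚ) * (q' * q' ^ (s - d - j)) - (-1 : ℚ) ^ j * (s.choose j : ℚ) := by
    intro j _; ring
  rw [Finset.sum_congr rfl e3, Finset.sum_sub_distrib] at h2
  linarith [h2]

/-- The coefficient sum vanishes for `1 ≤ s < d`. -/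
lemma zerolemma (q' : ℚ) (d s : ℕ) (hs1 : 1 ≤ s) (hsd : s < d) :
    ∑ t ∈ range (s + 1), (-1 : ℚ) ^ (s - t) * (s.choose t : ℚ) * q' ^ (t + 1 - d) = 0 := by
  have e0 : ∀ t ∈ range (s + 1),
      (-1 : ℚ) ^ (s - t) * (s.choose t : ℚ) * q' ^ (t + 1 - d)
        = (-1 : ℚ) ^ (s - t) * (s.choose t : ℚ) := by
    intro t ht; rw [mem_range] at ht
    rw [show t + 1 - d = 0 from by omega, pow_zero, mul_one]
  rw [Finset.sum_congr rfl e0, ← Finset.sum_range_reflect]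
  have e1 : ∀ j ∈ range (s + 1),
      (-1 : ℚ) ^ (s - (s + 1 - 1 - j)) * (s.choose (s + 1 - 1 - j) : ℚ)
        = (-1 : ℚ) ^ j * (s.choose j : ℚ) := by
    intro j hj; rw [mem_range] at hj
    rw [show s + 1 - 1 - j = s - j from by omega, show s - (s - j) = j from by omega,
      Nat.choose_symm (by omega)]
  rw [Finset.sum_congr rfl e1, alt_partial s s hs1, Nat.choose_eq_zero_of_lt (by omega)]
  simp



/-- Binomial expansion of `(x-y)^k` with the alternating sign on the second factor. -/
lemma sub_pow_rev {R : Type*} [CommRing R] (x y : R) (k : ℕ) :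
    (x - y) ^ k = ∑ j ∈ range (k + 1), (-1 : R) ^ j * x ^ (k - j) * y ^ j * (k.choose j : R) := by
  rw [sub_pow, ← Finset.sum_range_reflect]
  apply Finset.sum_congr rfl
  intro j hj; rw [mem_range] at hj
  rw [show k + 1 - 1 - j = k - j from by omega, show k - (k - j) = j from by omega,
    Nat.choose_symm (by omega : j ≤ k),
    show (k - j) + k = j + 2 * (k - j) from by omega, pow_add, pow_mul]
  simp

lemma mdsEnum_eq (q n d : ℕ) (hd : 1 ≤ d) (hdn : d ≤ n) :
    mdsEnum q n d = ∑ t ∈ Finset.range (n + 1),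
      MvPolynomial.C ((n.choose t : ℚ) * (q : ℚ) ^ (t + 1 - d)) * (X 0 - X 1) ^ (n - t) * X 1 ^ t := by
  have step1 : ∀ t ∈ Finset.range (n + 1),
      MvPolynomial.C ((n.choose t : ℚ) * (q : ℚ) ^ (t + 1 - d)) * (X 0 - X 1) ^ (n - t) * X 1 ^ t
        = ∑ s ∈ Finset.Ico t (n + 1),
            MvPolynomial.C ((n.choose t : ℚ) * (q : ℚ) ^ (t + 1 - d) *
                ((-1 : ℚ) ^ (s - t) * ((n - t).choose (s - t) : ℚ)))
              * (X 0 : MvPolynomial (Fin 2) ℚ) ^ (n - s) * X 1 ^ s := by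
    intro t ht; rw [Finset.mem_range] at ht
    rw [sub_pow_rev (X 0 : MvPolynomial (Fin 2) ℚ) (X 1) (n - t),
      Finset.sum_Ico_eq_sum_range, show n + 1 - t = (n - t) + 1 from by omega,
      Finset.mul_sum, Finset.sum_mul]
    apply Finset.sum_congr rfl
    intro j hj; rw [Finset.mem_range] at hj
    rw [show t + j - t = j from by omega, show n - (t + j) = n - t - j from by omega]
    simp only [map_mul, map_pow, map_neg, map_one, map_natCast]
    ring
  rw [Finset.sum_congr rfl step1, Finset.range_eq_Ico, Finset.sum_Ico_Ico_comm]
  have step2 : ∀ s ∈ Finset.Ico 0 (n + 1),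
      (∑ t ∈ Finset.Ico 0 (s + 1),
        MvPolynomial.C ((n.choose t : ℚ) * (q : ℚ) ^ (t + 1 - d) *
            ((-1 : ℚ) ^ (s - t) * ((n - t).choose (s - t) : ℚ)))
          * (X 0 : MvPolynomial (Fin 2) ℚ) ^ (n - s) * X 1 ^ s)
        = MvPolynomial.C ((n.choose s : ℚ) *
            ∑ t ∈ Finset.range (s + 1), (-1 : ℚ) ^ (s - t) * (s.choose t : ℚ) * (q : ℚ) ^ (t + 1 - d))
          * (X 0 : MvPolynomial (Fin 2) ℚ) ^ (n - s) * X 1 ^ s := by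
    intro s hs; rw [Finset.mem_Ico] at hs
    rw [← Finset.sum_mul, ← Finset.sum_mul, ← map_sum, ← Finset.range_eq_Ico]
    congr 2
    rw [Finset.mul_sum]
    congr 1
    apply Finset.sum_congr rfl
    intro t ht; rw [Finset.mem_range] at ht
    have hcm : (n.choose s : ℚ) * (s.choose t : ℚ)
        = (n.choose t : ℚ) * ((n - t).choose (s - t) : ℚ) := by
      rw [← Nat.cast_mul, ← Nat.cast_mul, Nat.choose_mul (by omega : t ≤ s)]
    linear_combination (-((-1 : ℚ)) ^ (s - t) * (q : ℚ) ^ (t + 1 - d)) * hcm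
  rw [Finset.sum_congr rfl step2]
  rw [← Finset.sum_Ico_consecutive _ (Nat.zero_le 1) (by omega : 1 ≤ n + 1),
    ← Finset.sum_Ico_consecutive _ (by omega : (1 : ℕ) ≤ d) (by omega : d ≤ n + 1)]
  have h0 : ∑ s ∈ Finset.Ico 0 1,
      MvPolynomial.C ((n.choose s : ℚ) *
          ∑ t ∈ Finset.range (s + 1), (-1 : ℚ) ^ (s - t) * (s.choose t : ℚ) * (q : ℚ) ^ (t + 1 - d))
        * (X 0 : MvPolynomial (Fin 2) ℚ) ^ (n - s) * X 1 ^ s = X 0 ^ n := by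
    rw [show Finset.Ico 0 1 = {0} from rfl, Finset.sum_singleton, Finset.sum_range_one,
      show (0 : ℕ) + 1 - d = 0 from by omega]
    norm_num
  have h1 : ∑ s ∈ Finset.Ico 1 d,
      MvPolynomial.C ((n.choose s : ℚ) *
          ∑ t ∈ Finset.range (s + 1), (-1 : ℚ) ^ (s - t) * (s.choose t : ℚ) * (q : ℚ) ^ (t + 1 - d))
        * (X 0 : MvPolynomial (Fin 2) ℚ) ^ (n - s) * X 1 ^ s = 0 := by
    apply Finset.sum_eq_zero
    intro s hs; rw [Finset.mem_Ico] at hs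
    rw [zerolemma (q : ℚ) d s hs.1 hs.2]
    simp
  have h2 : ∀ s ∈ Finset.Ico d (n + 1),
      MvPolynomial.C ((n.choose s : ℚ) *
          ∑ t ∈ Finset.range (s + 1), (-1 : ℚ) ^ (s - t) * (s.choose t : ℚ) * (q : ℚ) ^ (t + 1 - d))
        * (X 0 : MvPolynomial (Fin 2) ℚ) ^ (n - s) * X 1 ^ s
      = MvPolynomial.C ((n.choose s : ℚ) * ((q : ℚ) - 1) *
          ∑ i ∈ Finset.range (s - d + 1),
            (-1 : ℚ) ^ i * ((s - 1).choose i : ℚ) * (q : ℚ) ^ (s - d - i))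
        * X 0 ^ (n - s) * X 1 ^ s := by
    intro s hs; rw [Finset.mem_Ico] at hs
    rw [keylemma (q : ℚ) d s hd hs.1, ← mul_assoc]
  rw [h0, h1, Finset.sum_congr rfl h2, mdsEnum, Finset.Ico_add_one_right_eq_Icc, zero_add]

/-- The MacWilliams transformation identity for MDS weight
enumerators: `q^(n+1-d) · M_{n,n+2-d}(x,y) = M_{n,d}(x + (q-1)y, x - y)`. -/
theorem MDS_MacWilliams (q n d : ℕ) (hq : 1 < q) (hd : 2 ≤ d) (hdn : d ≤ n) :
    ((q : ℚ) ^ (n + 1 - d)) • mdsEnum q n (n + 2 - d)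
      = MvPolynomial.bind₁
          (fun j : Fin 2 => if j = 0 then X 0 + MvPolynomial.C ((q : ℚ) - 1) * X 1
            else X 0 - X 1)
          (mdsEnum q n d) := by
  set f : Fin 2 → MvPolynomial (Fin 2) ℚ :=
    fun j : Fin 2 => if j = 0 then X 0 + MvPolynomial.C ((q : ℚ) - 1) * X 1 else X 0 - X 1 with hf
  have hf0 : f 0 = X 0 + MvPolynomial.C ((q : ℚ) - 1) * X 1 := by simp [hf]
  have hf1 : f 1 = X 0 - X 1 := by simp [hf]
  have hqX : f 0 - f 1 = MvPolynomial.C (q : ℚ) * X 1 := by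
    rw [hf0, hf1, show MvPolynomial.C ((q : ℚ) - 1)
      = (MvPolynomial.C (q : ℚ) - 1 : MvPolynomial (Fin 2) ℚ) from by rw [map_sub, map_one]]
    ring
  have hrhs : ∀ t ∈ Finset.range (n + 1),
      bind₁ f (MvPolynomial.C ((n.choose t : ℚ) * (q : ℚ) ^ (t + 1 - d))
          * (X 0 - X 1) ^ (n - t) * X 1 ^ t)
        = MvPolynomial.C ((n.choose t : ℚ) * (q : ℚ) ^ (t + 1 - d) * (q : ℚ) ^ (n - t))
            * (X 0 - X 1) ^ t * X 1 ^ (n - t) := by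
    intro t ht
    simp only [map_mul, map_pow, map_sub, bind₁_X_right, bind₁_C_right]
    rw [hqX, hf1, mul_pow]
    ring
  rw [mdsEnum_eq q n d (by omega) hdn, mdsEnum_eq q n (n + 2 - d) (by omega) (by omega),
    map_sum, Finset.smul_sum, Finset.sum_congr rfl hrhs, ← Finset.sum_range_reflect]
  refine Finset.sum_congr rfl ?_
  intro t ht
  rw [Finset.mem_range] at ht
  rw [show n + 1 - 1 - t = n - t from by omega, Nat.choose_symm (by omega : t ≤ n),
    show n - (n - t) = t from by omega]
  have hco : (n.choose t : ℚ) * (q : ℚ) ^ (t + 1 - d) * (q : ℚ) ^ (n - t)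
      = (q : ℚ) ^ (n + 1 - d) * ((n.choose t : ℚ) * (q : ℚ) ^ ((n - t) + 1 - (n + 2 - d))) := by
    have he : (n + 1 - d) + ((n - t) + 1 - (n + 2 - d)) = (t + 1 - d) + (n - t) := by omega
    calc (n.choose t : ℚ) * (q : ℚ) ^ (t + 1 - d) * (q : ℚ) ^ (n - t)
        = (n.choose t : ℚ) * (q : ℚ) ^ ((t + 1 - d) + (n - t)) := by rw [pow_add]; ring
      _ = (n.choose t : ℚ) * (q : ℚ) ^ ((n + 1 - d) + ((n - t) + 1 - (n + 2 - d))) := by rw [he]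
      _ = _ := by rw [pow_add]; ring
  rw [hco, smul_eq_C_mul]
  simp only [map_mul]
  ring
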